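/- arXiv:1305.6557 — 4 statements merged into one kernel-verified Lean document; each statement's English description precedes it below -/
import Mathlib

section
/- Let V be a finite-dimensional real inner product space, let S be a self-adjoint endomorphism of V, and let π be a nonzero orthogonal projection in End(V) (a self-adjoint idempotent with π ≠ 0). Then Tr(exp(S)∘π) ≥ rank(π)·exp(Tr(S∘π)/rank(π)), where rank(π) denotes the dimension of the range of π. -/
open scoped RealInnerProductSpace
open Module LinearMap

lemma trace_eq_sum_inner' {V : Type*} [NormedAddCommGroup V] [InnerProductSpace ℝ V]
    [FiniteDimensional ℝ V] {ι : Type*} [Fintype ι] [DecidableEq ι]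
    (b : OrthonormalBasis ι ℝ V) (f : V →ₗ[ℝ] V) :
    LinearMap.trace ℝ V f = ∑ i, ⟪b i, f (b i)⟫ := by
  rw [LinearMap.trace_eq_matrix_trace ℝ b.toBasis, Matrix.trace]
  congr 1
  ext i
  rw [Matrix.diag_apply, LinearMap.toMatrix_apply, b.coe_toBasis, b.coe_toBasis_repr_apply,
    b.repr_apply_apply]

lemma exp_apply_eigenvector {V : Type*} [NormedAddCommGroup V] [InnerProductSpace ℝ V]
    [FiniteDimensional ℝ V] (S : V →L[ℝ] V) (x : V) (μ : ℝ) (h : S x = μ • x) :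
    NormedSpace.exp S x = Real.exp μ • x := by
  have hpow : ∀ n : ℕ, (S ^ n) x = μ ^ n • x := by
    intro n
    induction n with
    | zero => simp
    | succ n ih =>
      rw [pow_succ, ContinuousLinearMap.mul_apply, h, map_smul, ih, smul_smul, ← pow_succ']
  have hs : Summable fun n : ℕ => ((n.factorial : ℝ))⁻¹ • S ^ n :=
    NormedSpace.expSeries_summable' S
  have hE : NormedSpace.exp S = ∑' n : ℕ, ((n.factorial : ℝ))⁻¹ • S ^ n := by
    rw [NormedSpace.exp_eq_tsum ℝ]
  rw [hE]
  have happ : (∑' n : ℕ, ((n.factorial : ℝ))⁻¹ • S ^ n) x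
      = ∑' n : ℕ, (((n.factorial : ℝ))⁻¹ • S ^ n) x :=
    (ContinuousLinearMap.apply ℝ V x).map_tsum hs
  rw [happ]
  have hterm : ∀ n : ℕ, (((n.factorial : ℝ))⁻¹ • S ^ n) x
      = (((n.factorial : ℝ))⁻¹ * μ ^ n) • x := by
    intro n
    rw [ContinuousLinearMap.smul_apply, hpow, smul_smul]
  simp_rw [hterm]
  have hsum2 : Summable fun n : ℕ => ((n.factorial : ℝ))⁻¹ * μ ^ n := by
    simpa [smul_eq_mul] using NormedSpace.expSeries_summable' (𝕂 := ℝ) μ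
  rw [hsum2.tsum_smul_const]
  congr 1
  rw [Real.exp_eq_exp_ℝ, NormedSpace.exp_eq_tsum ℝ]
  simp [smul_eq_mul]

/-- **Convexity inequality for the exponential of a self-adjoint endomorphism.**
If `S` is a self-adjoint endomorphism of a finite-dimensional real inner product space `V`
and `π` is a nonzero orthogonal projection (self-adjoint idempotent), then
`Tr(exp(S) ∘ π) ≥ rank(π) · exp(Tr(S ∘ π) / rank(π))`. -/
theorem trace_exp_comp_proj_ge {V : Type*} [NormedAddCommGroup V] [InnerProductSpace ℝ V]
    [FiniteDimensional ℝ V]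
    (S π : V →L[ℝ] V)
    (hS : ContinuousLinearMap.adjoint S = S)
    (hπadj : ContinuousLinearMap.adjoint π = π)
    (hπidem : π ∘L π = π) (hπne : π ≠ 0) :
    LinearMap.trace ℝ V ((NormedSpace.exp S ∘L π).toLinearMap) ≥
      (Module.finrank ℝ (LinearMap.range π.toLinearMap) : ℝ) *
        Real.exp (LinearMap.trace ℝ V ((S ∘L π).toLinearMap) /
          (Module.finrank ℝ (LinearMap.range π.toLinearMap) : ℝ)) := by
  classical
  set r : ℝ := (Module.finrank ℝ (LinearMap.range π.toLinearMap) : ℝ) with hr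
  -- spectral theorem
  have hSsa : IsSelfAdjoint S := hS
  have hT : (S : V →ₗ[ℝ] V).IsSymmetric := hSsa.isSymmetric
  set n := Module.finrank ℝ V with hn
  have hfr : Module.finrank ℝ V = n := rfl
  set b := hT.eigenvectorBasis hfr with hb
  set μ := hT.eigenvalues hfr with hμ
  have heig : ∀ i, S (b i) = μ i • b i := fun i => hT.apply_eigenvectorBasis hfr i
  set w : Fin n → ℝ := fun i => ⟪b i, π (b i)⟫ with hw
  -- w is nonneg
  have hwnn : ∀ i, 0 ≤ w i := by
    intro i
    have h2 : π (π (b i)) = π (b i) := by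
      have := ContinuousLinearMap.ext_iff.mp hπidem (b i)
      simpa using this
    have : w i = ⟪π (b i), π (b i)⟫ := by
      show ⟪b i, π (b i)⟫ = _
      calc ⟪b i, π (b i)⟫ = ⟪b i, π (π (b i))⟫ := by rw [h2]
        _ = ⟪b i, ContinuousLinearMap.adjoint π (π (b i))⟫ := by rw [hπadj]
        _ = ⟪π (b i), π (b i)⟫ := by rw [ContinuousLinearMap.adjoint_inner_right]
    rw [this]
    exact real_inner_self_nonneg
  -- trace of π
  have hproj : LinearMap.IsProj (LinearMap.range π.toLinearMap) π.toLinearMap := by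
    constructor
    · intro x; exact LinearMap.mem_range_self _ x
    · rintro x ⟨y, rfl⟩
      have := congrArg (fun f => f y) hπidem
      simpa using this
  have htraceπ : LinearMap.trace ℝ V π.toLinearMap = r := hproj.trace
  have hsumw : ∑ i, w i = r := by
    rw [← htraceπ, trace_eq_sum_inner' b]
    rfl
  have hrpos : 0 < r := by
    rw [hr]
    have : LinearMap.range π.toLinearMap ≠ ⊥ := by
      intro hbot
      apply hπne
      ext x
      have : π.toLinearMap x ∈ (⊥ : Submodule ℝ V) := hbot ▸ LinearMap.mem_range_self _ x
      simpa using this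
    have : Nontrivial (LinearMap.range π.toLinearMap) :=
      Submodule.nontrivial_iff_ne_bot.mpr this
    exact_mod_cast Nat.cast_pos.mpr Module.finrank_pos
  -- compute traces
  have hexp : LinearMap.trace ℝ V ((NormedSpace.exp S ∘L π).toLinearMap)
      = ∑ i, Real.exp (μ i) * w i := by
    rw [ContinuousLinearMap.toLinearMap_comp, LinearMap.trace_comp_comm', ← ContinuousLinearMap.toLinearMap_comp,
      trace_eq_sum_inner' b]
    refine Finset.sum_congr rfl fun i _ => ?_
    simp only [ContinuousLinearMap.coe_comp, LinearMap.comp_apply, ContinuousLinearMap.coe_coe,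
      Function.comp_apply]
    rw [show (NormedSpace.exp S) (b i) = Real.exp (μ i) • b i from
      exp_apply_eigenvector S (b i) (μ i) (heig i)]
    rw [map_smul, real_inner_smul_right]
  have hS' : LinearMap.trace ℝ V ((S ∘L π).toLinearMap) = ∑ i, μ i * w i := by
    rw [ContinuousLinearMap.toLinearMap_comp, LinearMap.trace_comp_comm', ← ContinuousLinearMap.toLinearMap_comp,
      trace_eq_sum_inner' b]
    refine Finset.sum_congr rfl fun i _ => ?_
    simp only [ContinuousLinearMap.coe_comp, LinearMap.comp_apply, ContinuousLinearMap.coe_coe,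
      Function.comp_apply]
    rw [heig i, map_smul, real_inner_smul_right]
  rw [hexp, hS']
  -- Jensen
  have hjensen := convexOn_exp.map_sum_le (t := Finset.univ) (w := fun i => w i / r)
    (p := μ) (fun i _ => div_nonneg (hwnn i) hrpos.le)
    (by rw [← Finset.sum_div, hsumw, div_self hrpos.ne']) (fun i _ => Set.mem_univ _)
  have h1 : ∑ i, (w i / r) • μ i = (∑ i, μ i * w i) / r := by
    rw [Finset.sum_div]
    refine Finset.sum_congr rfl fun i _ => ?_
    rw [smul_eq_mul]; ring
  have h2 : ∑ i, (w i / r) • Real.exp (μ i) = (∑ i, Real.exp (μ i) * w i) / r := by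
    rw [Finset.sum_div]
    refine Finset.sum_congr rfl fun i _ => ?_
    rw [smul_eq_mul]; ring
  rw [h1, h2] at hjensen
  have h3 := mul_le_mul_of_nonneg_left hjensen hrpos.le
  have h4 : r * ((∑ i, Real.exp (μ i) * w i) / r) = ∑ i, Real.exp (μ i) * w i := by
    field_simp
  linarith
end

section
/- Let V be a nonzero finite-dimensional real inner product space, let M be a subset of End(V) closed under adjoints, let Z be the commutant of M in End(V), and let π_Z be the projection of End(V) onto Z along Z^⊥. Let S ∈ End(V) be self-adjoint and satisfy Tr(S∘z) = 0 for every z ∈ Z. Then π_Z(exp(S)) is expanding: ‖π_Z(exp(S))(v)‖ ≥ ‖v‖ for every v ∈ V. -/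
open scoped RealInnerProductSpace

/-- The commutant of a set `M` of continuous endomorphisms of `V`:
all `A ∈ End(V)` commuting with every element of `M`. -/
def setCommutant {V : Type*} [NormedAddCommGroup V] [InnerProductSpace ℝ V]
    [FiniteDimensional ℝ V] (M : Set (V →L[ℝ] V)) : Submodule ℝ (V →L[ℝ] V) where
  carrier := {A | ∀ m ∈ M, A ∘L m = m ∘L A}
  add_mem' := by
    intro a b ha hb m hm
    simp [ContinuousLinearMap.add_comp, ContinuousLinearMap.comp_add, ha m hm, hb m hm]
  zero_mem' := by intro m hm; simp
  smul_mem' := by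
    intro c a ha m hm
    simp [ContinuousLinearMap.smul_comp, ContinuousLinearMap.comp_smulₛₗ, ha m hm]

/-- The orthogonal of a subspace `Z` of `End(V)` with respect to the trace form
`(A, B) ↦ Tr(A ∘ B)`. -/
def traceOrthogonal {V : Type*} [NormedAddCommGroup V] [InnerProductSpace ℝ V]
    [FiniteDimensional ℝ V] (Z : Submodule ℝ (V →L[ℝ] V)) : Submodule ℝ (V →L[ℝ] V) where
  carrier := {A | ∀ z ∈ Z, LinearMap.trace ℝ V (A ∘L z).toLinearMap = 0}
  add_mem' := by
    intro a b ha hb z hz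
    rw [ContinuousLinearMap.add_comp, ContinuousLinearMap.coe_add, map_add,
      ha z hz, hb z hz, add_zero]
  zero_mem' := by intro z hz; simp
  smul_mem' := by
    intro c a ha z hz
    rw [ContinuousLinearMap.smul_comp, ContinuousLinearMap.coe_smul, map_smul,
      ha z hz, smul_zero]

set_option linter.unusedSectionVars false

section Helpers
variable {V : Type*} [NormedAddCommGroup V] [InnerProductSpace ℝ V] [FiniteDimensional ℝ V]


variable {V : Type*} [NormedAddCommGroup V] [InnerProductSpace ℝ V] [FiniteDimensional ℝ V]

noncomputable def trC (A : V →L[ℝ] V) : ℝ := LinearMap.trace ℝ V A.toLinearMap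

lemma trC_eq_sum_inner {ι : Type*} [Fintype ι] [DecidableEq ι]
    (b : OrthonormalBasis ι ℝ V) (A : V →L[ℝ] V) :
    trC A = ∑ i, ⟪b i, A (b i)⟫ := by
  rw [trC, LinearMap.trace_eq_matrix_trace ℝ b.toBasis, Matrix.trace]
  congr 1
  ext i
  rw [Matrix.diag, LinearMap.toMatrix_apply, b.coe_toBasis_repr_apply, b.repr_apply_apply]
  simp

lemma trC_comp_comm (A B : V →L[ℝ] V) : trC (A ∘L B) = trC (B ∘L A) := by
  have := LinearMap.trace_mul_comm ℝ A.toLinearMap B.toLinearMap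
  simpa [trC, Module.End.mul_eq_comp] using this

lemma trC_adjoint (A : V →L[ℝ] V) : trC (ContinuousLinearMap.adjoint A) = trC A := by
  let b := stdOrthonormalBasis ℝ V
  rw [trC_eq_sum_inner b, trC_eq_sum_inner b]
  refine Finset.sum_congr rfl fun i _ => ?_
  rw [ContinuousLinearMap.adjoint_inner_right, real_inner_comm]

variable {M : Set (V →L[ℝ] V)}

lemma one_mem_comm : (1 : V →L[ℝ] V) ∈ setCommutant M := by
  intro m _; simp [ContinuousLinearMap.one_def]

lemma mul_mem_comm {A B : V →L[ℝ] V} (hA : A ∈ setCommutant M) (hB : B ∈ setCommutant M) :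
    A ∘L B ∈ setCommutant M := by
  intro m hm
  rw [ContinuousLinearMap.comp_assoc, hB m hm, ← ContinuousLinearMap.comp_assoc, hA m hm,
    ContinuousLinearMap.comp_assoc]

lemma pow_mem_comm {A : V →L[ℝ] V} (hA : A ∈ setCommutant M) (n : ℕ) :
    A ^ n ∈ setCommutant M := by
  induction n with
  | zero => simpa using (one_mem_comm (M := M))
  | succ k ih => rw [pow_succ]; exact mul_mem_comm ih hA

lemma aeval_mem_comm {A : V →L[ℝ] V} (hA : A ∈ setCommutant M) (p : Polynomial ℝ) :
    Polynomial.aeval A p ∈ setCommutant M := by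
  induction p using Polynomial.induction_on' with
  | add p q hp hq => rw [map_add]; exact (setCommutant M).add_mem hp hq
  | monomial n a =>
    rw [Polynomial.aeval_monomial, ← Algebra.smul_def]
    exact (setCommutant M).smul_mem a (pow_mem_comm hA n)

lemma adjoint_mem_comm (hM : ∀ m ∈ M, ContinuousLinearMap.adjoint m ∈ M)
    {z : V →L[ℝ] V} (hz : z ∈ setCommutant M) :
    ContinuousLinearMap.adjoint z ∈ setCommutant M := by
  intro m hm
  have h := hz _ (hM m hm)
  have := congrArg ContinuousLinearMap.adjoint h
  rw [ContinuousLinearMap.adjoint_comp, ContinuousLinearMap.adjoint_comp,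
    ContinuousLinearMap.adjoint_adjoint] at this
  exact this.symm

lemma eq_zero_of_traceOrth (hM : ∀ m ∈ M, ContinuousLinearMap.adjoint m ∈ M)
    {z : V →L[ℝ] V} (hz : z ∈ setCommutant M)
    (h : ∀ z' ∈ setCommutant M, trC (z ∘L z') = 0) : z = 0 := by
  have h0 : trC (z ∘L ContinuousLinearMap.adjoint z) = 0 :=
    h _ (adjoint_mem_comm hM hz)
  let b := stdOrthonormalBasis ℝ V
  rw [trC_eq_sum_inner b] at h0
  have hterm : ∀ i, ⟪b i, (z ∘L ContinuousLinearMap.adjoint z) (b i)⟫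
      = ‖ContinuousLinearMap.adjoint z (b i)‖ ^ 2 := by
    intro i
    rw [ContinuousLinearMap.comp_apply, ← ContinuousLinearMap.adjoint_inner_left,
      real_inner_self_eq_norm_sq]
  rw [Finset.sum_congr rfl (fun i _ => hterm i)] at h0
  have hzero : ∀ i, ContinuousLinearMap.adjoint z (b i) = 0 := by
    intro i
    have hii := (Finset.sum_eq_zero_iff_of_nonneg
      (fun i _ => sq_nonneg ‖ContinuousLinearMap.adjoint z (b i)‖)).mp h0 i (Finset.mem_univ i)
    have := pow_eq_zero_iff (n := 2) (by norm_num) |>.mp hii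
    simpa using this
  have hadj : ContinuousLinearMap.adjoint z = 0 := by
    apply ContinuousLinearMap.coe_injective
    apply Module.Basis.ext b.toBasis
    intro i
    simpa using hzero i
  have := congrArg ContinuousLinearMap.adjoint hadj
  rwa [ContinuousLinearMap.adjoint_adjoint, map_zero] at this

lemma pow_apply_eigen {A : V →L[ℝ] V} {v : V} {μ : ℝ} (h : A v = μ • v) (n : ℕ) :
    (A ^ n) v = μ ^ n • v := by
  induction n with
  | zero => simp
  | succ k ih =>
    rw [pow_succ, ContinuousLinearMap.mul_apply, h, map_smul, ih, smul_smul, pow_succ,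
      mul_comm]

lemma aeval_apply_eigen {A : V →L[ℝ] V} {v : V} {μ : ℝ} (h : A v = μ • v) (p : Polynomial ℝ) :
    Polynomial.aeval A p v = p.eval μ • v := by
  induction p using Polynomial.induction_on' with
  | add p q hp hq => simp [hp, hq, add_smul]
  | monomial n a =>
    rw [Polynomial.aeval_monomial, ← Algebra.smul_def, ContinuousLinearMap.smul_apply,
      pow_apply_eigen h, Polynomial.eval_monomial, smul_smul]

lemma exp_apply_eigen (S : V →L[ℝ] V) {v : V} {μ : ℝ} (h : S v = μ • v) :
    NormedSpace.exp S v = Real.exp μ • v := by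
  have h1 : HasSum (fun n : ℕ => ((n.factorial⁻¹ : ℝ) • S ^ n)) (NormedSpace.exp S) :=
    NormedSpace.exp_series_hasSum_exp' S
  have h2 : HasSum (fun n : ℕ => ((n.factorial⁻¹ : ℝ) • S ^ n) v) (NormedSpace.exp S v) :=
    h1.mapL (ContinuousLinearMap.apply ℝ V v)
  have h3 : HasSum (fun n : ℕ => ((n.factorial⁻¹ : ℝ) • μ ^ n)) (NormedSpace.exp μ) :=
    NormedSpace.exp_series_hasSum_exp' μ
  have h4 : HasSum (fun n : ℕ => ((n.factorial⁻¹ : ℝ) • μ ^ n) • v)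
      (NormedSpace.exp μ • v) := h3.smul_const v
  have h5 : (fun n : ℕ => ((n.factorial⁻¹ : ℝ) • S ^ n) v)
      = fun n : ℕ => ((n.factorial⁻¹ : ℝ) • μ ^ n) • v := by
    funext n
    rw [ContinuousLinearMap.smul_apply, pow_apply_eigen h, smul_smul, smul_eq_mul]
  rw [h5] at h2
  rw [h2.unique h4, Real.exp_eq_exp_ℝ]

/-- trace-pairing map into the dual of Z -/
noncomputable def trPair (Z : Submodule ℝ (V →L[ℝ] V)) :
    (V →L[ℝ] V) →ₗ[ℝ] (Z →ₗ[ℝ] ℝ) where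
  toFun A :=
    { toFun := fun z => trC (A ∘L z.1)
      map_add' := by
        intro x y
        simp [trC, ContinuousLinearMap.comp_add]
      map_smul' := by
        intro c x
        simp [trC, ContinuousLinearMap.comp_smulₛₗ] }
  map_add' := by
    intro A B
    ext z
    simp [trC, ContinuousLinearMap.add_comp]
  map_smul' := by
    intro c A
    ext z
    simp [trC, ContinuousLinearMap.smul_comp]

lemma ker_trPair (Z : Submodule ℝ (V →L[ℝ] V)) :
    LinearMap.ker (trPair Z) = traceOrthogonal Z := by
  ext A
  constructor
  · intro hA z hz
    have := congrFun (congrArg DFunLike.coe hA) ⟨z, hz⟩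
    simpa [trPair, trC] using this
  · intro hA
    ext z
    simpa [trPair, trC] using hA z.1 z.2

lemma traceOrthogonal_eq_ker (Z : Submodule ℝ (V →L[ℝ] V))
    (πZ : (V →L[ℝ] V) →ₗ[ℝ] (V →L[ℝ] V))
    (hπZmem : ∀ A, πZ A ∈ Z)
    (hπZid : ∀ A ∈ Z, πZ A = A)
    (hπZzero : ∀ A ∈ traceOrthogonal Z, πZ A = 0) :
    traceOrthogonal Z = LinearMap.ker πZ := by
  have hle : traceOrthogonal Z ≤ LinearMap.ker πZ := fun A hA => hπZzero A hA
  refine (Submodule.eq_of_le_of_finrank_le hle ?_)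
  -- finrank (ker πZ) ≤ finrank (traceOrthogonal Z)
  have h1 := LinearMap.finrank_range_add_finrank_ker (trPair Z)
  have h2 : Module.finrank ℝ (LinearMap.range (trPair Z)) ≤ Module.finrank ℝ Z := by
    have := Submodule.finrank_le (LinearMap.range (trPair Z))
    calc Module.finrank ℝ (LinearMap.range (trPair Z))
        ≤ Module.finrank ℝ (Z →ₗ[ℝ] ℝ) := Submodule.finrank_le _
      _ = Module.finrank ℝ Z := Subspace.dual_finrank_eq
  have h3 := LinearMap.finrank_range_add_finrank_ker πZ
  have h4 : Module.finrank ℝ Z ≤ Module.finrank ℝ (LinearMap.range πZ) := by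
    apply Submodule.finrank_mono
    intro z hz
    exact ⟨z, hπZid z hz⟩
  rw [ker_trPair] at h1
  omega

lemma trC_sub (A B : V →L[ℝ] V) : trC (A - B) = trC A - trC B := by
  simp [trC, map_sub]


end Helpers

set_option maxHeartbeats 1000000 in
/-- **The projection of `exp(S)` on the commutant is expanding.**
Let `M ⊆ End(V)` be closed under adjoints, `Z` its commutant and `π_Z` the projection of
`End(V)` onto `Z` along the trace-form orthogonal `Z^⊥`.  If `S` is self-adjoint and
trace-orthogonal to `Z`, then `‖π_Z(exp S) v‖ ≥ ‖v‖` for every `v ∈ V`. -/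
theorem norm_proj_commutant_exp_ge {V : Type*} [NormedAddCommGroup V]
    [InnerProductSpace ℝ V] [FiniteDimensional ℝ V] [Nontrivial V]
    (M : Set (V →L[ℝ] V))
    (hM : ∀ m ∈ M, ContinuousLinearMap.adjoint m ∈ M)
    (πZ : (V →L[ℝ] V) →ₗ[ℝ] (V →L[ℝ] V))
    (hπZmem : ∀ A, πZ A ∈ setCommutant M)
    (hπZid : ∀ A ∈ setCommutant M, πZ A = A)
    (hπZzero : ∀ A ∈ traceOrthogonal (setCommutant M), πZ A = 0)
    (S : V →L[ℝ] V) (hS : ContinuousLinearMap.adjoint S = S)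
    (hSZ : ∀ z ∈ setCommutant M, LinearMap.trace ℝ V (S ∘L z).toLinearMap = 0) :
    ∀ v : V, ‖(πZ (NormedSpace.exp S)) v‖ ≥ ‖v‖ := by
  classical
  intro v
  set Z := setCommutant M with hZdef
  have hker := traceOrthogonal_eq_ker Z πZ hπZmem hπZid hπZzero
  have key : ∀ (A : V →L[ℝ] V), ∀ z ∈ Z, trC (πZ A ∘L z) = trC (A ∘L z) := by
    intro A z hz
    have hmem : A - πZ A ∈ LinearMap.ker πZ := by
      rw [LinearMap.mem_ker, map_sub, hπZid _ (hπZmem A), sub_self]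
    rw [← hker] at hmem
    have h0 : trC ((A - πZ A) ∘L z) = 0 := hmem z hz
    rw [ContinuousLinearMap.sub_comp, trC_sub] at h0
    linarith
  -- self-adjointness facts
  have hSsa : IsSelfAdjoint S := by
    rw [IsSelfAdjoint, ContinuousLinearMap.star_eq_adjoint]; exact hS
  have hexp_sa : IsSelfAdjoint (NormedSpace.exp S) := hSsa.exp
  have hexp_adj : ContinuousLinearMap.adjoint (NormedSpace.exp S) = NormedSpace.exp S := by
    rw [← ContinuousLinearMap.star_eq_adjoint]; exact hexp_sa
  set E := πZ (NormedSpace.exp S) with hEdef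
  have hEZ : E ∈ Z := hπZmem _
  have hEadj : ContinuousLinearMap.adjoint E = E := by
    have hsub : E - ContinuousLinearMap.adjoint E ∈ Z :=
      Z.sub_mem hEZ (adjoint_mem_comm hM hEZ)
    have hzero : ∀ z' ∈ Z, trC ((E - ContinuousLinearMap.adjoint E) ∘L z') = 0 := by
      intro z' hz'
      have hz'' : ContinuousLinearMap.adjoint z' ∈ Z := adjoint_mem_comm hM hz'
      have e1 : trC (E ∘L z') = trC (NormedSpace.exp S ∘L z') := key _ z' hz'
      have e2 : trC (ContinuousLinearMap.adjoint E ∘L z')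
          = trC (NormedSpace.exp S ∘L z') := by
        calc trC (ContinuousLinearMap.adjoint E ∘L z')
            = trC (ContinuousLinearMap.adjoint (ContinuousLinearMap.adjoint z' ∘L E)) := by
              rw [ContinuousLinearMap.adjoint_comp, ContinuousLinearMap.adjoint_adjoint]
          _ = trC (ContinuousLinearMap.adjoint z' ∘L E) := trC_adjoint _
          _ = trC (E ∘L ContinuousLinearMap.adjoint z') := trC_comp_comm _ _
          _ = trC (NormedSpace.exp S ∘L ContinuousLinearMap.adjoint z') := key _ _ hz''
          _ = trC (ContinuousLinearMap.adjoint z' ∘L NormedSpace.exp S) := trC_comp_comm _ _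
          _ = trC (ContinuousLinearMap.adjoint
                (ContinuousLinearMap.adjoint (NormedSpace.exp S) ∘L z')) := by
              rw [ContinuousLinearMap.adjoint_comp, ContinuousLinearMap.adjoint_adjoint]
          _ = trC (ContinuousLinearMap.adjoint (NormedSpace.exp S) ∘L z') := trC_adjoint _
          _ = trC (NormedSpace.exp S ∘L z') := by rw [hexp_adj]
      rw [ContinuousLinearMap.sub_comp, trC_sub, e1, e2, sub_self]
    have h0 := eq_zero_of_traceOrth hM hsub hzero
    have := sub_eq_zero.mp h0
    exact this.symm
  have hEsa : IsSelfAdjoint E := by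
    rw [IsSelfAdjoint, ContinuousLinearMap.star_eq_adjoint]; exact hEadj
  have hSsym : (S : V →ₗ[ℝ] V).IsSymmetric :=
    ContinuousLinearMap.isSelfAdjoint_iff_isSymmetric.mp hSsa
  have hEsym : (E : V →ₗ[ℝ] V).IsSymmetric :=
    ContinuousLinearMap.isSelfAdjoint_iff_isSymmetric.mp hEsa
  -- eigenbases
  let d := hSsym.eigenvectorBasis rfl
  let μ := hSsym.eigenvalues rfl
  have hd : ∀ i, S (d i) = μ i • d i := by
    intro i
    exact hSsym.apply_eigenvectorBasis rfl i
  let c := hEsym.eigenvectorBasis rfl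
  let ν := hEsym.eigenvalues rfl
  have hEc : ∀ j, E (c j) = ν j • c j := by
    intro j
    exact hEsym.apply_eigenvectorBasis rfl j
  -- B := exp S - 1 - S is positive semidefinite
  set B := NormedSpace.exp S - 1 - S with hBdef
  have hBsa : IsSelfAdjoint B := (hexp_sa.sub (IsSelfAdjoint.one _)).sub hSsa
  have hBsym : (B : V →ₗ[ℝ] V).IsSymmetric :=
    ContinuousLinearMap.isSelfAdjoint_iff_isSymmetric.mp hBsa
  have hBd : ∀ i, B (d i) = (Real.exp (μ i) - 1 - μ i) • d i := by
    intro i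
    rw [hBdef]
    rw [ContinuousLinearMap.sub_apply, ContinuousLinearMap.sub_apply,
      ContinuousLinearMap.one_apply, exp_apply_eigen S (hd i), hd i,
      sub_smul, sub_smul, one_smul]
  have hBpos : ∀ w : V, 0 ≤ ⟪w, B w⟫ := by
    intro w
    rw [← d.sum_inner_mul_inner w (B w)]
    apply Finset.sum_nonneg
    intro i _
    have h1 : ⟪d i, B w⟫ = (Real.exp (μ i) - 1 - μ i) * ⟪d i, w⟫ := by
      have hsymm := hBsym (d i) w
      simp only [ContinuousLinearMap.coe_coe] at hsymm
      rw [← hsymm, hBd i, real_inner_smul_left]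
    have hc : 0 ≤ Real.exp (μ i) - 1 - μ i := by
      have := Real.add_one_le_exp (μ i); linarith
    rw [h1, real_inner_comm w (d i)]
    nlinarith [mul_nonneg hc (sq_nonneg (⟪w, d i⟫ : ℝ))]
  -- each eigenvalue of E is at least 1
  have hν : ∀ i, (1 : ℝ) ≤ ν i := by
    intro i
    set t := ν i with ht
    set s : Finset ℝ := Finset.image ν Finset.univ with hs
    have hts : t ∈ s := Finset.mem_image_of_mem ν (Finset.mem_univ i)
    set p := Lagrange.basis s id t with hp
    set e := Polynomial.aeval E p with he
    have heval : ∀ j, p.eval (ν j) = if ν j = t then 1 else 0 := by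
      intro j
      by_cases hj : ν j = t
      · rw [hj, if_pos rfl, hp]
        have := Lagrange.eval_basis_self (s := s) (v := id) (Set.injOn_id _) hts
        simpa using this
      · rw [if_neg hj, hp]
        have := Lagrange.eval_basis_of_ne (s := s) (v := id) (i := t) (j := ν j)
          (fun hh => hj hh.symm) (Finset.mem_image_of_mem ν (Finset.mem_univ j))
        simpa using this
    have hec : ∀ j, e (c j) = (if ν j = t then (1:ℝ) else 0) • c j := by
      intro j; rw [he, aeval_apply_eigen (hEc j), heval j]
    have heZ : e ∈ Z := aeval_mem_comm hEZ p
    have hinner : ∀ j, ⟪c j, c j⟫ = (1:ℝ) := by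
      intro j
      rw [real_inner_self_eq_norm_sq, c.orthonormal.1 j]
      norm_num
    set k : ℝ := ∑ j, if ν j = t then (1:ℝ) else 0 with hk
    have hk1 : (1:ℝ) ≤ k := by
      rw [hk]
      have := Finset.single_le_sum
        (f := fun j => if ν j = t then (1:ℝ) else 0)
        (fun j _ => by positivity) (Finset.mem_univ i)
      simpa [← ht] using this
    have trE : trC (E ∘L e) = t * k := by
      rw [trC_eq_sum_inner c, hk, Finset.mul_sum]
      refine Finset.sum_congr rfl fun j _ => ?_
      rw [ContinuousLinearMap.comp_apply, hec j, map_smul, hEc j]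
      by_cases hj : ν j = t
      · rw [if_pos hj, one_smul, real_inner_smul_right, hinner j, hj]
      · rw [if_neg hj, zero_smul, inner_zero_right, mul_zero]
    have tre : trC ((1 : V →L[ℝ] V) ∘L e) = k := by
      rw [trC_eq_sum_inner c, hk]
      refine Finset.sum_congr rfl fun j _ => ?_
      rw [ContinuousLinearMap.comp_apply, ContinuousLinearMap.one_apply, hec j,
        real_inner_smul_right, hinner j, mul_one]
    have trS0 : trC (S ∘L e) = 0 := hSZ e heZ
    have trExp : trC (NormedSpace.exp S ∘L e) = t * k := by
      rw [← key (NormedSpace.exp S) e heZ, ← hEdef, trE]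
    have trB : trC (B ∘L e) = t * k - k := by
      rw [hBdef, ContinuousLinearMap.sub_comp, ContinuousLinearMap.sub_comp,
        trC_sub, trC_sub, trExp, tre, trS0, sub_zero]
    have posB : 0 ≤ trC (B ∘L e) := by
      rw [trC_eq_sum_inner c]
      apply Finset.sum_nonneg
      intro j _
      rw [ContinuousLinearMap.comp_apply, hec j, map_smul, real_inner_smul_right]
      by_cases hj : ν j = t
      · rw [if_pos hj, one_mul]; exact hBpos (c j)
      · rw [if_neg hj, zero_mul]
    rw [trB] at posB
    nlinarith
  -- conclusion
  have hrepr : ∀ j, ⟪c j, E v⟫ = ν j * ⟪c j, v⟫ := by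
    intro j
    have hsymm := hEsym (c j) v
    simp only [ContinuousLinearMap.coe_coe] at hsymm
    rw [← hsymm, hEc j, real_inner_smul_left]
  have hnorm : ∀ w : V, ‖w‖ ^ 2 = ∑ j, ⟪c j, w⟫ ^ 2 := by
    intro w
    rw [← real_inner_self_eq_norm_sq, ← c.sum_inner_mul_inner w w]
    refine Finset.sum_congr rfl fun j _ => ?_
    rw [real_inner_comm w (c j)]; ring
  have hsq : ‖v‖ ^ 2 ≤ ‖E v‖ ^ 2 := by
    rw [hnorm v, hnorm (E v)]
    apply Finset.sum_le_sum
    intro j _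
    rw [hrepr j]
    have h1 : (1:ℝ) ≤ ν j ^ 2 := by nlinarith [hν j]
    nlinarith [mul_nonneg (sub_nonneg.mpr h1) (sq_nonneg (⟪c j, v⟫ : ℝ))]
  nlinarith [norm_nonneg (E v), norm_nonneg v]
end

section
/- Let θ be a Cartan involution of a finite-dimensional real Lie algebra g and let I be a Lie ideal of g. Then θ(I) = I and the restriction of θ to I is a Cartan involution of the Lie algebra I; that is, the bilinear form (x,y) ↦ −B_I(x, θ(y)) on I is symmetric and positive definite, where B_I denotes the Killing form of the Lie algebra I. -/
/-- **The restriction of a Cartan involution to an ideal is a Cartan involution.**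
Let `θ` be a Cartan involution of a finite-dimensional real Lie algebra `g` (an involutive
Lie algebra automorphism for which `B_θ(X,Y) = -B(X, θ Y)` is symmetric positive definite,
`B` being the Killing form of `g`) and let `I` be a Lie ideal of `g`.  Then `θ(I) = I`,
and for any map `θI : I → I` induced by `θ` (i.e. agreeing with `θ` on `I`), `θI` is an
involution and the bilinear form `(x, y) ↦ -B_I(x, θI y)` on `I` is symmetric and positive
definite, where `B_I` is the Killing form of the Lie algebra `I`. -/
theorem cartanInvolution_restrict_lieIdeal {g : Type*} [LieRing g] [LieAlgebra ℝ g]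
    [Module.Finite ℝ g]
    (θ : g →ₗ⁅ℝ⁆ g) (hinv : ∀ x, θ (θ x) = x)
    (hsymm : ∀ x y : g, killingForm ℝ g x (θ y) = killingForm ℝ g y (θ x))
    (hpos : ∀ x : g, x ≠ 0 → 0 < -(killingForm ℝ g x (θ x)))
    (I : LieIdeal ℝ g) :
    (θ : g → g) '' (I : Set g) = (I : Set g) ∧
    ∀ θI : ↥I →ₗ⁅ℝ⁆ ↥I, (∀ x : ↥I, (θI x : g) = θ (x : g)) →
      (∀ x : ↥I, θI (θI x) = x) ∧
      (∀ x y : ↥I, killingForm ℝ ↥I x (θI y) = killingForm ℝ ↥I y (θI x)) ∧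
      (∀ x : ↥I, x ≠ 0 → 0 < -(killingForm ℝ ↥I x (θI x))) := by
  classical
  have hFD : FiniteDimensional ℝ g := ‹Module.Finite ℝ g›
  set B := killingForm ℝ g with hB
  have hBcomm : ∀ x y : g, B x y = B y x := fun x y => LieModule.traceForm_comm ℝ g g x y
  -- the positive definite form Bθ(x,y) = -B(x, θ y)
  set Bθ : LinearMap.BilinForm ℝ g := -(B.compl₂ θ.toLinearMap) with hBθ
  have hBθ_apply : ∀ x y : g, Bθ x y = -(B x (θ y)) := by
    intro x y; simp [hBθ]
  have hBθ_refl : Bθ.IsRefl := by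
    intro x y h
    rw [hBθ_apply] at h ⊢
    rw [hsymm x y] at h
    exact h
  have hBθ_pos : ∀ x : g, x ≠ 0 → 0 < Bθ x x := by
    intro x hx; rw [hBθ_apply]; exact hpos x hx
  set W : Submodule ℝ g := (I : Submodule ℝ g) with hW
  have hnd : (Bθ.restrict W).Nondegenerate := by
    apply LinearMap.BilinForm.Nondegenerate.ofSeparatingLeft
    intro x hx
    by_contra hne
    have h0 : Bθ (x : g) (x : g) = 0 := by
      have := hx x
      simpa using this
    have hxne : (x : g) ≠ 0 := by
      simpa using hne
    exact (hBθ_pos (x : g) hxne).ne' h0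
  have hcompl :=
    LinearMap.BilinForm.isCompl_orthogonal_of_restrict_nondegenerate hBθ_refl hnd
  set K : Submodule ℝ g := Bθ.orthogonal W with hK
  have hK_mem : ∀ b : g, b ∈ K ↔ ∀ y ∈ I, B y (θ b) = 0 := by
    intro b
    constructor
    · intro hb y hy
      have := hb y hy
      rw [hBθ_apply] at this
      linarith
    · intro h y hy
      rw [hBθ_apply, h y hy, neg_zero]
  -- K is an ideal
  have hK_lie : ∀ z : g, ∀ b ∈ K, ⁅z, b⁆ ∈ K := by
    intro z b hb
    rw [hK_mem] at hb ⊢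
    intro y hy
    have : θ ⁅z, b⁆ = ⁅θ z, θ b⁆ := θ.map_lie z b
    rw [this]
    have hinv' : B y ⁅θ z, θ b⁆ = B ⁅y, θ z⁆ (θ b) :=
      (LieModule.traceForm_apply_lie_apply ℝ g g y (θ z) (θ b)).symm
    rw [hinv']
    have hmem : ⁅y, θ z⁆ ∈ I := by
      have : ⁅θ z, y⁆ ∈ I := I.lie_mem hy
      rw [← lie_skew]
      exact neg_mem this
    exact hb _ hmem
  -- I ∩ K = 0
  have hIK0 : ∀ v : g, v ∈ I → v ∈ K → v = 0 := by
    intro v hvI hvK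
    by_contra hne
    have h0 : B v (θ v) = 0 := (hK_mem v).mp hvK v hvI
    have := hpos v hne
    rw [h0] at this
    simp at this
  -- B vanishes on I × K
  have hBIK : ∀ x ∈ I, ∀ b ∈ K, B x b = 0 := by
    intro x hx b hb
    have hzero : (LieAlgebra.ad ℝ g x) ∘ₗ (LieAlgebra.ad ℝ g b) = 0 := by
      ext v
      have h1 : ⁅b, v⁆ ∈ K := by
        rw [← lie_skew]
        exact neg_mem (hK_lie v b hb)
      have h2 : ⁅x, ⁅b, v⁆⁆ ∈ I := by
        rw [← lie_skew]
        exact neg_mem (I.lie_mem hx)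
      have h3 : ⁅x, ⁅b, v⁆⁆ ∈ K := hK_lie x _ h1
      simp [LieAlgebra.ad_apply, hIK0 _ h2 h3]
    rw [hB, killingForm_apply_apply, hzero, map_zero]
  -- θ maps I into I
  have hsub : ∀ x ∈ I, θ x ∈ I := by
    intro x hx
    have htop : θ x ∈ W ⊔ K := by
      rw [hcompl.sup_eq_top]; trivial
    obtain ⟨a, ha, b, hb, hab⟩ := Submodule.mem_sup.mp htop
    have haI : a ∈ I := ha
    have hθb : θ b = x - θ a := by
      have h1 : θ (θ x) = θ (a + b) := by rw [hab]
      rw [hinv, map_add] at h1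
      rw [eq_sub_iff_add_eq, add_comm, h1]
    have hbθb : B b (θ b) = 0 := by
      rw [hθb, map_sub]
      have e1 : B b x = 0 := by rw [hBcomm]; exact hBIK x hx b hb
      have e2 : B b (θ a) = 0 := by
        rw [← hsymm a b]
        exact (hK_mem b).mp hb a haI
      rw [e1, e2, sub_zero]
    have hb0 : b = 0 := by
      by_contra hne
      have := hpos b hne
      rw [hbθb] at this
      simp at this
    have : θ x = a := by rw [← hab, hb0, add_zero]
    rw [this]; exact haI
  constructor
  · ext z
    constructor
    · rintro ⟨x, hx, rfl⟩
      exact hsub x hx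
    · intro hz
      exact ⟨θ z, hsub z hz, hinv z⟩
  · intro θI hθI
    have hKF' : ∀ x y : ↥I, killingForm ℝ ↥I x y = B (x : g) (y : g) := by
      intro x y; rw [LieIdeal.killingForm_eq ℝ g I]; rfl
    refine ⟨?_, ?_, ?_⟩
    · intro x
      apply Subtype.ext
      rw [hθI, hθI, hinv]
    · intro x y
      rw [hKF', hKF', hθI, hθI]
      exact hsymm (x : g) (y : g)
    · intro x hx
      rw [hKF', hθI]
      apply hpos
      simpa using hx
end

section
/- Let g be a finite-dimensional real semisimple Lie algebra whose Killing form B is anisotropic, i.e. B(X,X) ≠ 0 for every nonzero X ∈ g. Then B is negative definite. -/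
open scoped RealInnerProductSpace

/-- If `B` is a symmetric positive definite bilinear form on a finite-dimensional real vector
space and `A` is skew-adjoint with respect to `B`, then `Tr (A ∘ A) ≤ 0`. -/
lemma trace_sq_nonpos_of_skew {V : Type*} [AddCommGroup V] [Module ℝ V] [Module.Finite ℝ V]
    (B : LinearMap.BilinForm ℝ V) (hsymm : ∀ x y, B x y = B y x)
    (hpos : ∀ x, x ≠ 0 → 0 < B x x)
    (A : V →ₗ[ℝ] V) (hskew : ∀ x y, B (A x) y = - B x (A y)) :
    LinearMap.trace ℝ V (A ∘ₗ A) ≤ 0 := by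
  letI c : InnerProductSpace.Core ℝ V :=
    { inner := fun x y => B x y
      conj_inner_symm := fun x y => by simpa using hsymm y x
      re_inner_nonneg := fun x => by
        rcases eq_or_ne x 0 with rfl | hx
        · simp
        · exact le_of_lt (by simpa using hpos x hx)
      definite := fun x hx => by
        by_contra h
        exact (hpos x h).ne' (by simpa using hx)
      add_left := fun x y z => by simp
      smul_left := fun x y r => by simp }
  letI : NormedAddCommGroup V := c.toNormedAddCommGroup
  letI : InnerProductSpace ℝ V := InnerProductSpace.ofCore c.toCore
  haveI : FiniteDimensional ℝ V := ‹Module.Finite ℝ V›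
  let b := stdOrthonormalBasis ℝ V
  have hinner : ∀ x y : V, ⟪x, y⟫ = B x y := fun x y => rfl
  rw [LinearMap.trace_eq_matrix_trace ℝ b.toBasis (A ∘ₗ A)]
  rw [Matrix.trace]
  apply Finset.sum_nonpos
  intro i _
  have hdiag : (LinearMap.toMatrix b.toBasis b.toBasis (A ∘ₗ A)).diag i
      = b.toBasis.repr ((A ∘ₗ A) (b i)) i := by
    simp [Matrix.diag, LinearMap.toMatrix_apply]
  rw [hdiag, b.coe_toBasis_repr_apply, b.repr_apply_apply, hinner]
  have : B (b i) (A (A (b i))) = - B (A (b i)) (A (b i)) := by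
    rw [hsymm, hskew]
  simp only [LinearMap.comp_apply]
  rw [this, neg_nonpos]
  rcases eq_or_ne (A (b i)) 0 with h0 | h0
  · simp [h0]
  · exact le_of_lt (hpos _ h0)

/-- **Anisotropic Killing forms are negative definite.**
Let `g` be a finite-dimensional real semisimple Lie algebra (nondegenerate Killing form)
whose Killing form `B` is anisotropic, i.e. `B(X, X) ≠ 0` for every nonzero `X`.
Then `B` is negative definite. -/
theorem killingForm_neg_definite_of_anisotropic {g : Type*} [LieRing g] [LieAlgebra ℝ g]
    [Module.Finite ℝ g]
    (hss : (killingForm ℝ g).Nondegenerate)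
    (hani : ∀ X : g, X ≠ 0 → killingForm ℝ g X X ≠ 0) :
    ∀ X : g, X ≠ 0 → killingForm ℝ g X X < 0 := by
  intro X hX
  set B := killingForm ℝ g with hB
  have hsymm : ∀ x y : g, B x y = B y x := fun x y => LieModule.traceForm_comm ℝ g g x y
  -- First: the form is definite (constant sign), by an intermediate value theorem argument.
  have hdef : (∀ Y : g, Y ≠ 0 → 0 < B Y Y) ∨ (∀ Y : g, Y ≠ 0 → B Y Y < 0) := by
    by_contra h
    push_neg at h
    obtain ⟨⟨Y, hY, hYle⟩, ⟨Z, hZ, hZge⟩⟩ := h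
    have hYlt : B Y Y < 0 := lt_of_le_of_ne hYle (hani Y hY)
    have hZlt : 0 < B Z Z := lt_of_le_of_ne hZge (Ne.symm (hani Z hZ))
    -- path from Z to Y
    set f : ℝ → ℝ := fun t => B (Z + t • (Y - Z)) (Z + t • (Y - Z)) with hf
    have hfc : Continuous f := by
      have : f = fun t => B Z Z + t * (B Z (Y - Z) + B (Y - Z) Z) + t ^ 2 * B (Y - Z) (Y - Z) := by
        funext t
        simp only [hf, map_add, map_smul, LinearMap.add_apply, LinearMap.smul_apply,
          smul_eq_mul]
        ring
      rw [this]
      continuity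
    have hf0 : 0 < f 0 := by simpa [hf] using hZlt
    have hf1 : f 1 < 0 := by
      have : Z + (1 : ℝ) • (Y - Z) = Y := by simp
      simpa [hf, this] using hYlt
    obtain ⟨t, ht, hft⟩ := intermediate_value_Icc' (by norm_num : (0:ℝ) ≤ 1)
      hfc.continuousOn (Set.mem_Icc.mpr ⟨le_of_lt hf1, le_of_lt hf0⟩)
    have hne : Z + t • (Y - Z) ≠ 0 := by
      intro h0
      -- then Z = -t/(1-t) ... derive sign contradiction
      have ht0 : t ≠ 0 := by
        rintro rfl
        rw [hf] at hft
        simp only [zero_smul, add_zero] at h0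
        exact hZ h0
      have ht1 : t ≠ 1 := by
        rintro rfl
        simp only [one_smul, add_sub_cancel] at h0
        exact hY h0
      -- Z + t • (Y - Z) = 0 means (1 - t) • Z = (-t) • Y
      have hrel : (1 - t) • Z = (-t) • Y := by
        have : Z + t • Y - t • Z = 0 := by
          rw [smul_sub] at h0; abel_nf at h0 ⊢; linear_combination (norm := module) h0
        rw [sub_smul, neg_smul, one_smul]
        linear_combination (norm := module) this
      have h1 : B ((1 - t) • Z) ((1 - t) • Z) = (1 - t) ^ 2 * B Z Z := by
        simp only [map_smul, LinearMap.smul_apply, smul_eq_mul]; ring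
      have h2 : B ((-t) • Y) ((-t) • Y) = t ^ 2 * B Y Y := by
        simp only [map_smul, LinearMap.smul_apply, smul_eq_mul]; ring
      have heq : (1 - t) ^ 2 * B Z Z = t ^ 2 * B Y Y := by
        rw [← h1, ← h2, hrel]
      have hgt : 0 < (1 - t) ^ 2 * B Z Z :=
        mul_pos (pow_two_pos_of_ne_zero (sub_ne_zero.mpr (Ne.symm ht1))) hZlt
      have hlt : t ^ 2 * B Y Y < 0 :=
        mul_neg_of_pos_of_neg (pow_two_pos_of_ne_zero ht0) hYlt
      linarith
    exact hani _ hne hft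
  -- Rule out the positive definite case using skew-adjointness of `ad`.
  rcases hdef with hposd | hnegd
  · exfalso
    have hskew : ∀ y z : g, B ((LieAlgebra.ad ℝ g X) y) z = - B y ((LieAlgebra.ad ℝ g X) z) := by
      intro y z
      simpa using LieModule.traceForm_apply_lie_apply' ℝ g g X y z
    have htr : LinearMap.trace ℝ g ((LieAlgebra.ad ℝ g X) ∘ₗ (LieAlgebra.ad ℝ g X)) ≤ 0 :=
      trace_sq_nonpos_of_skew B hsymm hposd (LieAlgebra.ad ℝ g X) hskew
    have hBX : B X X = LinearMap.trace ℝ g ((LieAlgebra.ad ℝ g X) ∘ₗ (LieAlgebra.ad ℝ g X)) :=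
      killingForm_apply_apply ℝ g X X
    exact absurd (hBX ▸ htr) (not_le.mpr (hposd X hX))
  · exact hnegd X hX
end
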